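/- Let Σ and A be K×K positive definite matrices and M a random binary vector with P(M = 1_K) > 0. Then e_K^T E[V_M(Σ)]^{-1} e_K ≤ e_K^T E[V_M(A)]^{-1} E[V_M(A) Σ V_M(A)] E[V_M(A)]^{-1} e_K. -/

import Mathlib

open Matrix BigOperators Finset

/-- The `K × n_m` selection matrix `D_m` whose columns are the standard basis vectors
`e_t` for the indices `t` with `m t = true` (columns indexed by the subtype of such `t`). -/
noncomputable def selMat (K : ℕ) (m : Fin K → Bool) :
    Matrix (Fin K) {t : Fin K // m t = true} ℝ :=
  Matrix.of fun i j => if i = (j : Fin K) then 1 else 0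

/-- `V_m(Σ) = D_m (D_mᵀ Σ D_m)⁻¹ D_mᵀ`.  When `m = 0` the column index type is empty,
so this is the zero matrix, matching the convention `V_0(Σ) = 0`. -/
noncomputable def Vm (K : ℕ) (S : Matrix (Fin K) (Fin K) ℝ) (m : Fin K → Bool) :
    Matrix (Fin K) (Fin K) ℝ :=
  selMat K m * ((selMat K m)ᵀ * S * selMat K m)⁻¹ * (selMat K m)ᵀ

/-- `E[V_M(Σ)] = ∑ m P(M = m) V_m(Σ)`. -/
noncomputable def EVm (K : ℕ) (S : Matrix (Fin K) (Fin K) ℝ)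
    (p : (Fin K → Bool) → ℝ) : Matrix (Fin K) (Fin K) ℝ :=
  ∑ m : Fin K → Bool, p m • Vm K S m

lemma selMat_tmm {K : ℕ} (m : Fin K → Bool) (S : Matrix (Fin K) (Fin K) ℝ) :
    (selMat K m)ᵀ * S * selMat K m = S.submatrix Subtype.val Subtype.val := by
  ext i j
  simp [selMat, Matrix.mul_apply]

lemma selMat_tm {K : ℕ} (m : Fin K → Bool) :
    (selMat K m)ᵀ * selMat K m = 1 := by
  ext i j
  simp [selMat, Matrix.mul_apply, Matrix.one_apply, Subtype.val_inj, eq_comm]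

-- mulVec by selMat is injective-ish: Dᵀ (D x) = x

lemma selMat_mulVec_ne {K : ℕ} (m : Fin K → Bool) {x : {t : Fin K // m t = true} → ℝ}
    (hx : x ≠ 0) : selMat K m *ᵥ x ≠ 0 := by
  intro h
  apply hx
  have : (selMat K m)ᵀ *ᵥ (selMat K m *ᵥ x) = 0 := by rw [h, Matrix.mulVec_zero]
  rwa [Matrix.mulVec_mulVec, selMat_tm, Matrix.one_mulVec] at this

lemma submatrix_posDef {K : ℕ} (m : Fin K → Bool) {S : Matrix (Fin K) (Fin K) ℝ}
    (hS : S.PosDef) : (S.submatrix (Subtype.val : {t : Fin K // m t = true} → Fin K)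
      Subtype.val).PosDef := by
  refine Matrix.PosDef.of_dotProduct_mulVec_pos (hS.isHermitian.submatrix _) fun x hx => ?_
  rw [← selMat_tmm]
  have := hS.dotProduct_mulVec_pos (selMat_mulVec_ne m hx)
  simpa [star_trivial, Matrix.dotProduct_mulVec, Matrix.vecMul_vecMul,
    ← Matrix.mulVec_mulVec, Matrix.vecMul_transpose, Matrix.mul_assoc,
    Matrix.dotProduct_mulVec] using this

lemma submatrix_isUnit {K : ℕ} (m : Fin K → Bool) {S : Matrix (Fin K) (Fin K) ℝ}
    (hS : S.PosDef) : IsUnit ((selMat K m)ᵀ * S * selMat K m) := by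
  rw [selMat_tmm]; exact (submatrix_posDef m hS).isUnit

lemma Vm_transpose {K : ℕ} {S : Matrix (Fin K) (Fin K) ℝ} (hS : S.PosDef)
    (m : Fin K → Bool) : (Vm K S m)ᵀ = Vm K S m := by
  have hsym : ((selMat K m)ᵀ * S * selMat K m)ᵀ = (selMat K m)ᵀ * S * selMat K m := by
    rw [selMat_tmm]
    rw [← Matrix.conjTranspose_eq_transpose_of_trivial]
    exact (hS.isHermitian.submatrix _).eq
  unfold Vm
  rw [Matrix.transpose_mul, Matrix.transpose_mul, Matrix.transpose_transpose,
    Matrix.transpose_nonsing_inv, hsym]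
  simp only [Matrix.mul_assoc]

lemma VmA_mul_S_mul_VmS {K : ℕ} {S A : Matrix (Fin K) (Fin K) ℝ} (hS : S.PosDef)
    (m : Fin K → Bool) : Vm K A m * S * Vm K S m = Vm K A m := by
  unfold Vm
  have h := (submatrix_isUnit m hS)
  calc selMat K m * ((selMat K m)ᵀ * A * selMat K m)⁻¹ * (selMat K m)ᵀ * S *
        (selMat K m * ((selMat K m)ᵀ * S * selMat K m)⁻¹ * (selMat K m)ᵀ)
      = selMat K m * ((selMat K m)ᵀ * A * selMat K m)⁻¹ *
        (((selMat K m)ᵀ * S * selMat K m) * ((selMat K m)ᵀ * S * selMat K m)⁻¹) *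
        (selMat K m)ᵀ := by
        simp only [Matrix.mul_assoc]
    _ = selMat K m * ((selMat K m)ᵀ * A * selMat K m)⁻¹ * (selMat K m)ᵀ := by
        rw [Matrix.mul_nonsing_inv _ ((Matrix.isUnit_iff_isUnit_det _).mp h), Matrix.mul_one]

lemma Vm_posSemidef {K : ℕ} {S : Matrix (Fin K) (Fin K) ℝ} (hS : S.PosDef)
    (m : Fin K → Bool) : (Vm K S m).PosSemidef := by
  unfold Vm
  rw [selMat_tmm]
  have h : ((S.submatrix (Subtype.val : {t : Fin K // m t = true} → Fin K)
      Subtype.val)⁻¹).PosSemidef := (submatrix_posDef m hS).inv.posSemidef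
  have := h.mul_mul_conjTranspose_same (selMat K m)
  rwa [Matrix.conjTranspose_eq_transpose_of_trivial] at this

lemma selMat_mt_full {K : ℕ} :
    selMat K (fun _ => true) * (selMat K (fun _ => true))ᵀ = 1 := by
  ext i j
  simp only [selMat, Matrix.mul_apply, Matrix.transpose_apply, Matrix.of_apply,
    ite_mul, one_mul, zero_mul, Matrix.one_apply]
  rw [Finset.sum_eq_single ⟨i, rfl⟩]
  · simp [eq_comm]
  · intro b _ hb
    rw [if_neg]
    intro h; exact absurd (Subtype.ext h.symm) hb
  · simp

lemma Vm_full {K : ℕ} {S : Matrix (Fin K) (Fin K) ℝ} (hS : S.PosDef) :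
    Vm K S (fun _ => true) = S⁻¹ := by
  have hu := submatrix_isUnit (fun _ : Fin K => true) hS
  have h1 : Vm K S (fun _ => true) * S = 1 := by
    unfold Vm
    calc selMat K _ * ((selMat K _)ᵀ * S * selMat K _)⁻¹ * (selMat K _)ᵀ * S
        = selMat K _ * ((selMat K _)ᵀ * S * selMat K _)⁻¹ * (selMat K _)ᵀ * S *
          (selMat K (fun _ => true) * (selMat K (fun _ => true))ᵀ) := by
          rw [selMat_mt_full, Matrix.mul_one]
      _ = selMat K (fun _ => true) * ((((selMat K (fun _ => true))ᵀ * S *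
            selMat K (fun _ => true))⁻¹ * ((selMat K (fun _ => true))ᵀ * S *
            selMat K (fun _ => true)))) * (selMat K (fun _ => true))ᵀ := by
          simp only [Matrix.mul_assoc]
      _ = 1 := by
          rw [Matrix.nonsing_inv_mul _ ((Matrix.isUnit_iff_isUnit_det _).mp hu),
            Matrix.mul_one, selMat_mt_full]
  exact (Matrix.inv_eq_left_inv h1).symm

lemma EVm_dot {K : ℕ} (S : Matrix (Fin K) (Fin K) ℝ) (p : (Fin K → Bool) → ℝ)
    (x y : Fin K → ℝ) :
    x ⬝ᵥ (EVm K S p) *ᵥ y = ∑ m : Fin K → Bool, p m * (x ⬝ᵥ Vm K S m *ᵥ y) := by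
  unfold EVm
  have h : (∑ m : Fin K → Bool, p m • Vm K S m) *ᵥ y
      = ∑ m : Fin K → Bool, (p m • Vm K S m) *ᵥ y := by
    ext i
    simp only [Matrix.mulVec, dotProduct, Matrix.sum_apply, Finset.sum_apply,
      Finset.sum_mul]
    exact Finset.sum_comm
  rw [h]
  simp only [dotProduct, Finset.sum_apply, Matrix.smul_mulVec,
    Pi.smul_apply, smul_eq_mul, Finset.mul_sum]
  rw [Finset.sum_comm]
  exact Finset.sum_congr rfl fun m _ => Finset.sum_congr rfl fun i _ => by ring

lemma EVm_transpose {K : ℕ} {S : Matrix (Fin K) (Fin K) ℝ} (hS : S.PosDef)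
    (p : (Fin K → Bool) → ℝ) : (EVm K S p)ᵀ = EVm K S p := by
  unfold EVm
  rw [Matrix.transpose_sum]
  congr 1; ext m
  rw [Matrix.transpose_smul, Vm_transpose hS]

lemma EVm_posDef {K : ℕ} {S : Matrix (Fin K) (Fin K) ℝ} (hS : S.PosDef)
    (p : (Fin K → Bool) → ℝ) (hp0 : ∀ m, 0 ≤ p m)
    (hfull : 0 < p (fun _ => true)) : (EVm K S p).PosDef := by
  refine Matrix.PosDef.of_dotProduct_mulVec_pos ?_ ?_
  · rw [Matrix.IsHermitian, Matrix.conjTranspose_eq_transpose_of_trivial]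
    exact EVm_transpose hS p
  · intro x hx
    rw [star_trivial, EVm_dot]
    refine Finset.sum_pos' (fun m _ => ?_) ⟨fun _ => true, Finset.mem_univ _, ?_⟩
    · have := (Vm_posSemidef hS m).dotProduct_mulVec_nonneg x
      rw [star_trivial] at this
      exact mul_nonneg (hp0 m) this
    · have := hS.inv.dotProduct_mulVec_pos hx
      rw [star_trivial] at this
      rw [Vm_full hS]
      exact mul_pos hfull this

lemma dot_shift {n : Type*} [Fintype n] (P : Matrix n n ℝ) (x y : n → ℝ) :
    x ⬝ᵥ (P *ᵥ y) = (Pᵀ *ᵥ x) ⬝ᵥ y := by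
  rw [Matrix.dotProduct_mulVec, Matrix.mulVec_transpose]

lemma sum_smul_dot {K : ℕ} (N : (Fin K → Bool) → Matrix (Fin K) (Fin K) ℝ)
    (p : (Fin K → Bool) → ℝ) (x y : Fin K → ℝ) :
    x ⬝ᵥ (∑ m : Fin K → Bool, p m • N m) *ᵥ y
      = ∑ m : Fin K → Bool, p m * (x ⬝ᵥ N m *ᵥ y) := by
  have h : (∑ m : Fin K → Bool, p m • N m) *ᵥ y
      = ∑ m : Fin K → Bool, (p m • N m) *ᵥ y := by
    ext i
    simp only [Matrix.mulVec, dotProduct, Matrix.sum_apply, Finset.sum_apply,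
      Finset.sum_mul]
    exact Finset.sum_comm
  rw [h]
  simp only [dotProduct, Finset.sum_apply, Matrix.smul_mulVec,
    Pi.smul_apply, smul_eq_mul, Finset.mul_sum]
  rw [Finset.sum_comm]
  exact Finset.sum_congr rfl fun m _ => Finset.sum_congr rfl fun i _ => by ring

lemma entry_eq_dot {n : Type*} [Fintype n] [DecidableEq n] (M : Matrix n n ℝ) (i j : n) :
    M i j = (Pi.single i 1) ⬝ᵥ M *ᵥ (Pi.single j 1) := by
  simp [dotProduct, Matrix.mulVec, Pi.single_apply, Finset.sum_ite_eq,
    Finset.mul_sum, mul_comm]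

open scoped MatrixOrder in
lemma exists_sqrt_sym {n : Type*} [Fintype n] [DecidableEq n] {S : Matrix n n ℝ}
    (hS : S.PosSemidef) : ∃ L : Matrix n n ℝ, L * L = S ∧ Lᵀ = L :=
  ⟨CFC.sqrt S, CFC.sqrt_mul_sqrt_self S hS.nonneg, by
    rw [← Matrix.conjTranspose_eq_transpose_of_trivial]
    exact (CFC.sqrt_nonneg S).posSemidef.isHermitian⟩

/-- Lemma 1(3), inequality: for positive definite `Σ` and `A` and a random
binary vector `M` with `P(M = 1_K) > 0`,
`e_Kᵀ E[V_M(Σ)]⁻¹ e_K ≤ e_Kᵀ E[V_M(A)]⁻¹ E[V_M(A) Σ V_M(A)] E[V_M(A)]⁻¹ e_K`. -/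
theorem stmt4 (K : ℕ)
    (S A : Matrix (Fin (K+1)) (Fin (K+1)) ℝ) (hS : S.PosDef) (hA : A.PosDef)
    (p : (Fin (K+1) → Bool) → ℝ) (hp0 : ∀ m, 0 ≤ p m) (hp1 : ∑ m, p m = 1)
    (hfull : 0 < p (fun _ => true)) :
    (EVm (K+1) S p)⁻¹ (Fin.last K) (Fin.last K)
      ≤ ((EVm (K+1) A p)⁻¹
          * (∑ m : Fin (K+1) → Bool, p m • (Vm (K+1) A m * S * Vm (K+1) A m))
          * (EVm (K+1) A p)⁻¹) (Fin.last K) (Fin.last K) := by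
  classical
  set B := EVm (K+1) S p with hBdef
  set C := EVm (K+1) A p with hCdef
  set W := ∑ m : Fin (K+1) → Bool, p m • (Vm (K+1) A m * S * Vm (K+1) A m) with hWdef
  have hB : B.PosDef := EVm_posDef hS p hp0 hfull
  have hC : C.PosDef := EVm_posDef hA p hp0 hfull
  have hBu : IsUnit B.det := (Matrix.isUnit_iff_isUnit_det _).mp hB.isUnit
  have hCu : IsUnit C.det := (Matrix.isUnit_iff_isUnit_det _).mp hC.isUnit
  set e : Fin (K+1) → ℝ := Pi.single (Fin.last K) 1 with hedef
  have he0 : e ≠ 0 := fun h => by simpa [hedef] using congrFun h (Fin.last K)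
  set u : Fin (K+1) → ℝ := C⁻¹ *ᵥ e with hudef
  set v : Fin (K+1) → ℝ := B⁻¹ *ᵥ e with hvdef
  obtain ⟨L, hLL, hLt⟩ := exists_sqrt_sym hS.posSemidef
  have dot_shift' : ∀ (P : Matrix (Fin (K+1)) (Fin (K+1)) ℝ) (x y : Fin (K+1) → ℝ),
      (P *ᵥ x) ⬝ᵥ y = x ⬝ᵥ (Pᵀ *ᵥ y) := by
    intro P x y
    rw [dot_shift, Matrix.transpose_transpose]
  have hdot : ∀ x y : Fin (K+1) → ℝ, (L *ᵥ x) ⬝ᵥ (L *ᵥ y) = x ⬝ᵥ (S *ᵥ y) := by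
    intro x y
    rw [dot_shift', hLt, Matrix.mulVec_mulVec, hLL]
  -- generic factorization through L
  have key : ∀ (P Q : Matrix (Fin (K+1)) (Fin (K+1)) ℝ), Pᵀ = P →
      ∀ a b : Fin (K+1) → ℝ,
      (L *ᵥ (P *ᵥ a)) ⬝ᵥ (L *ᵥ (Q *ᵥ b)) = a ⬝ᵥ (P * S * Q) *ᵥ b := by
    intro P Q hP a b
    rw [hdot, Matrix.mulVec_mulVec, dot_shift', hP, Matrix.mulVec_mulVec,
      ← Matrix.mul_assoc]
  -- per-m vectors
  set x : (Fin (K+1) → Bool) → Fin (K+1) → ℝ :=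
    fun m => L *ᵥ (Vm (K+1) A m *ᵥ u) with hxdef
  set y : (Fin (K+1) → Bool) → Fin (K+1) → ℝ :=
    fun m => L *ᵥ (Vm (K+1) S m *ᵥ v) with hydef
  have hsum : ∀ (f g : (Fin (K+1) → Bool) → Fin (K+1) → ℝ),
      ∑ q : (Fin (K+1) → Bool) × Fin (K+1),
        (Real.sqrt (p q.1) * f q.1 q.2) * (Real.sqrt (p q.1) * g q.1 q.2)
      = ∑ m : Fin (K+1) → Bool, p m * (f m ⬝ᵥ g m) := by
    intro f g
    rw [Fintype.sum_prod_type]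
    refine Finset.sum_congr rfl fun m _ => ?_
    rw [dotProduct, Finset.mul_sum]
    refine Finset.sum_congr rfl fun i _ => ?_
    rw [mul_mul_mul_comm, Real.mul_self_sqrt (hp0 m)]
  have hCt : Cᵀ = C := by rw [hCdef]; exact EVm_transpose hA p
  have hBt : Bᵀ = B := by rw [hBdef]; exact EVm_transpose hS p
  have hCit : (C⁻¹)ᵀ = C⁻¹ := by rw [Matrix.transpose_nonsing_inv, hCt]
  have hBit : (B⁻¹)ᵀ = B⁻¹ := by rw [Matrix.transpose_nonsing_inv, hBt]
  -- the three sums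
  have hFG : ∑ m : Fin (K+1) → Bool, p m * (x m ⬝ᵥ y m) = e ⬝ᵥ v := by
    have h1 : ∀ m : Fin (K+1) → Bool, x m ⬝ᵥ y m = u ⬝ᵥ Vm (K+1) A m *ᵥ v := by
      intro m
      rw [hxdef, hydef]
      show (L *ᵥ (Vm (K+1) A m *ᵥ u)) ⬝ᵥ (L *ᵥ (Vm (K+1) S m *ᵥ v)) = _
      rw [key _ _ (Vm_transpose hA m) u v, VmA_mul_S_mul_VmS hS m]
    simp_rw [h1]
    rw [← EVm_dot A p u v, ← hCdef, hudef, dot_shift', hCit, Matrix.mulVec_mulVec,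
      Matrix.nonsing_inv_mul C hCu, Matrix.one_mulVec]
  have hGG : ∑ m : Fin (K+1) → Bool, p m * (y m ⬝ᵥ y m) = e ⬝ᵥ v := by
    have h1 : ∀ m : Fin (K+1) → Bool, y m ⬝ᵥ y m = v ⬝ᵥ Vm (K+1) S m *ᵥ v := by
      intro m
      rw [hydef]
      show (L *ᵥ (Vm (K+1) S m *ᵥ v)) ⬝ᵥ (L *ᵥ (Vm (K+1) S m *ᵥ v)) = _
      rw [key _ _ (Vm_transpose hS m) v v, VmA_mul_S_mul_VmS hS m]
    simp_rw [h1]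
    rw [← EVm_dot S p v v, ← hBdef, hvdef, dot_shift', hBit, Matrix.mulVec_mulVec,
      Matrix.nonsing_inv_mul B hBu, Matrix.one_mulVec]
  have hFF : ∑ m : Fin (K+1) → Bool, p m * (x m ⬝ᵥ x m)
      = e ⬝ᵥ (C⁻¹ * W * C⁻¹) *ᵥ e := by
    have h1 : ∀ m : Fin (K+1) → Bool,
        x m ⬝ᵥ x m = u ⬝ᵥ (Vm (K+1) A m * S * Vm (K+1) A m) *ᵥ u := by
      intro m
      rw [hxdef]
      exact key _ _ (Vm_transpose hA m) u u
    simp_rw [h1]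
    rw [← sum_smul_dot _ p u u, ← hWdef, hudef, dot_shift', hCit,
      Matrix.mulVec_mulVec, Matrix.mulVec_mulVec]
  -- Cauchy-Schwarz
  have hCS := Finset.sum_mul_sq_le_sq_mul_sq Finset.univ
    (fun q : (Fin (K+1) → Bool) × Fin (K+1) => Real.sqrt (p q.1) * x q.1 q.2)
    (fun q : (Fin (K+1) → Bool) × Fin (K+1) => Real.sqrt (p q.1) * y q.1 q.2)
  rw [hsum x y] at hCS
  have hxx := hsum x x
  have hyy := hsum y y
  simp only [pow_two] at hCS hxx hyy ⊢
  rw [hxx, hyy, hFG, hGG, hFF] at hCS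
  -- positivity of t
  have ht : 0 < e ⬝ᵥ v := by
    have := hB.inv.dotProduct_mulVec_pos he0
    rwa [star_trivial] at this
  have hfin : e ⬝ᵥ v ≤ e ⬝ᵥ (C⁻¹ * W * C⁻¹) *ᵥ e :=
    le_of_mul_le_mul_right hCS ht
  calc B⁻¹ (Fin.last K) (Fin.last K) = e ⬝ᵥ B⁻¹ *ᵥ e := entry_eq_dot _ _ _
    _ ≤ e ⬝ᵥ (C⁻¹ * W * C⁻¹) *ᵥ e := hfin
    _ = (C⁻¹ * W * C⁻¹) (Fin.last K) (Fin.last K) := (entry_eq_dot _ _ _).symm
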